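/- If f_0(i) = 1 for all i ≥ 1, and c_m is the k-fold convolution array of the (m-1)-st invert transform f_{m-1} of f_0, then f_{m-1}(n) = m^{n-1} and c_m(n,k) = m^{n-k} · C(n-1, k-1) for all 1 ≤ k ≤ n. -/

import Mathlib

/-- The invert transform: `invT g n = g n + ∑_{j=1}^{n-1} g j * invT g (n-j)`. -/
def invT (g : ℕ → ℤ) : ℕ → ℤ
  | n => g n + ∑ j ∈ (Finset.Ico 1 n).attach, g j.1 * invT g (n - j.1)
decreasing_by
  have h := Finset.mem_Ico.mp j.2
  omega

/-- Compositions of `n` into `k` positive parts. -/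
def comps (k n : ℕ) : Finset (Fin k → ℕ) :=
  (Finset.Nat.antidiagonalTuple k n).filter fun f => ∀ i, 0 < f i

/-- The `k`-fold convolution array of `g`:
sum over compositions of `n` into `k` positive parts of the products of values of `g`. -/
def compArr (g : ℕ → ℤ) (n k : ℕ) : ℤ :=
  ∑ f ∈ comps k n, ∏ i, g (f i)

lemma mem_comps {k n : ℕ} {f : Fin k → ℕ} :
    f ∈ comps k n ↔ ∑ i, f i = n ∧ ∀ i, 0 < f i := by
  simp [comps, Finset.Nat.mem_antidiagonalTuple]

lemma invT_pow (g : ℕ → ℤ) (c : ℤ) (hg : ∀ n, g n = c ^ (n - 1)) :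
    ∀ n, invT g n = (c + 1) ^ (n - 1) := by
  intro n
  induction n using Nat.strong_induction_on with
  | _ n ih =>
    rw [invT]
    rcases Nat.eq_zero_or_pos n with rfl | hn
    · rw [show Finset.Ico 1 0 = ∅ by simp]
      simp [hg]
    obtain ⟨N, rfl⟩ : ∃ N, n = N + 1 := ⟨n - 1, by omega⟩
    have hsum : ∀ j ∈ (Finset.Ico 1 (N + 1)).attach,
        g j.1 * invT g (N + 1 - j.1) = c ^ (j.1 - 1) * (c + 1) ^ (N - j.1) := by
      intro j _
      have hj2 := Finset.mem_Ico.mp j.2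
      rw [hg, ih _ (by omega)]
      congr 1
      congr 1
      omega
    rw [Finset.sum_congr rfl hsum,
      Finset.sum_attach (Finset.Ico 1 (N + 1)) (fun j => c ^ (j - 1) * (c + 1) ^ (N - j)),
      Finset.sum_Ico_eq_sum_range]
    have hterm : ∀ i ∈ Finset.range (N + 1 - 1),
        c ^ (1 + i - 1) * (c + 1) ^ (N - (1 + i)) = c ^ i * (c + 1) ^ (N - 1 - i) := by
      intro i _
      congr 1
      · congr 1; omega
      · congr 1; omega
    rw [Finset.sum_congr rfl hterm]
    have key := geom_sum₂_mul c (c + 1) N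
    rw [show c - (c + 1) = -1 by ring, mul_neg_one] at key
    have hgN : g (N + 1) = c ^ N := by rw [hg]; norm_num
    have h1 : N + 1 - 1 = N := by omega
    rw [h1, hgN]
    linarith [key]

lemma iter_pow (t : ℕ) : ∀ n, (invT^[t] (fun _ => (1 : ℤ))) n = ((t : ℤ) + 1) ^ (n - 1) := by
  induction t with
  | zero => intro n; simp
  | succ t ih =>
    intro n
    rw [Function.iterate_succ_apply']
    rw [invT_pow _ ((t : ℤ) + 1) ih n]
    push_cast
    ring_nf

lemma comps_eq_empty {k n : ℕ} (h : n < k) : comps k n = ∅ := by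
  apply Finset.eq_empty_of_forall_notMem
  intro f hf
  obtain ⟨hs, hp⟩ := mem_comps.mp hf
  have : (Finset.univ : Finset (Fin k)).card • 1 ≤ ∑ i, f i :=
    Finset.card_nsmul_le_sum _ _ _ (fun i _ => hp i)
  simp at this
  omega

lemma compArr_of_lt (g : ℕ → ℤ) {n k : ℕ} (h : n < k) : compArr g n k = 0 := by
  rw [compArr, comps_eq_empty h, Finset.sum_empty]

lemma compArr_zero (g : ℕ → ℤ) (n : ℕ) : compArr g n 0 = if n = 0 then 1 else 0 := by
  rcases Nat.eq_zero_or_pos n with rfl | hn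
  · rw [compArr]
    have : comps 0 0 = {![]} := by
      ext f
      simp only [mem_comps, Finset.mem_singleton]
      constructor
      · intro _
        exact funext fun i => i.elim0
      · rintro rfl
        exact ⟨by simp, fun i => i.elim0⟩
    simp [this]
  · have he : comps 0 n = ∅ := by
      apply Finset.eq_empty_of_forall_notMem
      intro f hf
      obtain ⟨hs, -⟩ := mem_comps.mp hf
      simp at hs
      omega
    rw [compArr, he, Finset.sum_empty, if_neg (by omega)]

lemma compArr_succ (g : ℕ → ℤ) (n k : ℕ) :
    compArr g n (k + 1) = ∑ j ∈ Finset.Ico 1 (n + 1), g j * compArr g (n - j) k := by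
  unfold compArr
  simp_rw [Finset.mul_sum]
  rw [Finset.sum_sigma']
  rw [eq_comm]
  refine Finset.sum_nbij' (i := fun p => Fin.cons p.1 p.2)
    (j := fun f => ⟨f 0, fun i => f i.succ⟩) ?_ ?_ ?_ ?_ ?_
  · rintro ⟨j, f⟩ hp
    rw [Finset.mem_sigma] at hp
    obtain ⟨hj, hf⟩ := hp
    replace hj := Finset.mem_Ico.mp hj
    obtain ⟨hs, hpos⟩ := mem_comps.mp hf
    refine mem_comps.mpr ⟨?_, ?_⟩
    · rw [Fin.sum_cons, hs]; omega
    · intro i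
      induction i using Fin.cases with
      | zero => simpa using (show 0 < j from hj.1)
      | succ i => simpa using hpos i
  · intro f hf
    obtain ⟨hs, hpos⟩ := mem_comps.mp hf
    rw [Fin.sum_univ_succ] at hs
    beta_reduce
    refine Finset.mem_sigma.mpr ⟨?_, ?_⟩
    · show f 0 ∈ Finset.Ico 1 (n + 1)
      exact Finset.mem_Ico.mpr ⟨hpos 0, by omega⟩
    · show (fun i => f i.succ) ∈ comps k (n - f 0)
      refine mem_comps.mpr ⟨by omega, fun i => hpos i.succ⟩
  · rintro ⟨j, f⟩ _
    simp
  · intro f _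
    exact Fin.cons_self_tail f
  · rintro ⟨j, f⟩ _
    rw [Fin.prod_univ_succ]
    simp

lemma sum_choose_aux (n k : ℕ) (hk : 1 ≤ k) (hn : k + 1 ≤ n) :
    ∑ j ∈ Finset.Ico 1 (n - k + 1), (n - j - 1).choose (k - 1) = (n - 1).choose k := by
  rw [Finset.sum_Ico_eq_sum_range, ← Finset.sum_range_reflect]
  have h1 : n - k + 1 - 1 = n - k := by omega
  rw [h1]
  have h2 : ∀ i ∈ Finset.range (n - k),
      (n - (1 + (n - k - 1 - i)) - 1).choose (k - 1) = (i + (k - 1)).choose (k - 1) := by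
    intro i hi
    rw [Finset.mem_range] at hi
    congr 1
    omega
  rw [Finset.sum_congr rfl h2]
  have h3 : n - k = (n - k - 1) + 1 := by omega
  rw [h3, Nat.sum_range_add_choose]
  congr 1 <;> omega

lemma compArr_pow (m : ℕ) (hm : 1 ≤ m) :
    ∀ k, 1 ≤ k → ∀ n, k ≤ n →
      compArr (fun i => (m : ℤ) ^ (i - 1)) n k =
        (m : ℤ) ^ (n - k) * ((n - 1).choose (k - 1)) := by
  intro k hk
  induction k, hk using Nat.le_induction with
  | base =>
    intro n hn
    rw [show (1 : ℕ) = 0 + 1 from rfl, compArr_succ]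
    rw [Finset.sum_eq_single n]
    · rw [compArr_zero]
      simp
    · intro b hb hbn
      replace hb := Finset.mem_Ico.mp hb
      rw [compArr_zero, if_neg (by omega), mul_zero]
    · intro hn'
      exact absurd (Finset.mem_Ico.mpr ⟨by omega, by omega⟩) hn'
  | succ k hk1 ih =>
    intro n hn
    rw [compArr_succ]
    have hsplit : Finset.Ico 1 (n + 1) =
        Finset.Ico 1 (n - k + 1) ∪ Finset.Ico (n - k + 1) (n + 1) :=
      (Finset.Ico_union_Ico_eq_Ico (by omega) (by omega)).symm
    rw [hsplit, Finset.sum_union (Finset.Ico_disjoint_Ico_consecutive _ _ _)]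
    have h2 : ∑ j ∈ Finset.Ico (n - k + 1) (n + 1),
        (fun i => (m : ℤ) ^ (i - 1)) j * compArr (fun i => (m : ℤ) ^ (i - 1)) (n - j) k = 0 := by
      apply Finset.sum_eq_zero
      intro j hj
      replace hj := Finset.mem_Ico.mp hj
      rw [compArr_of_lt _ (by omega), mul_zero]
    rw [h2, add_zero]
    have h1 : ∀ j ∈ Finset.Ico 1 (n - k + 1),
        (fun i => (m : ℤ) ^ (i - 1)) j * compArr (fun i => (m : ℤ) ^ (i - 1)) (n - j) k =
          (m : ℤ) ^ (n - (k + 1)) * ((n - j - 1).choose (k - 1)) := by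
      intro j hj
      replace hj := Finset.mem_Ico.mp hj
      rw [ih (n - j) (by omega)]
      rw [← mul_assoc, ← pow_add]
      congr 2
      omega
    rw [Finset.sum_congr rfl h1, ← Finset.mul_sum]
    congr 1
    rw [← Nat.cast_sum]
    rw [sum_choose_aux n k hk1 hn]
    norm_num

theorem stmt7 (m n k : ℕ) (hm : 1 ≤ m) (hk : 1 ≤ k) (hkn : k ≤ n) :
    (invT^[m - 1] (fun _ => (1 : ℤ))) n = (m : ℤ) ^ (n - 1) ∧
    compArr (invT^[m - 1] (fun _ => (1 : ℤ))) n k =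
      (m : ℤ) ^ (n - k) * ((n - 1).choose (k - 1)) := by
  have hg : (invT^[m - 1] (fun _ => (1 : ℤ))) = fun i => (m : ℤ) ^ (i - 1) := by
    funext i
    rw [iter_pow]
    congr 1
    rw [Nat.cast_sub hm]
    push_cast
    ring
  constructor
  · rw [hg]
  · rw [hg]
    exact compArr_pow m hm k hk n hkn
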